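/- Let A be a set with mul : A → A → Option A a Frobenius algebra in Rel, i.e. satisfying (Surj), (C), (A) and (F) as in the context. Then the relation a ~ b, defined by (mul a b).isSome, is transitive: if (mul a b).isSome and (mul b c).isSome then (mul a c).isSome. -/

import Mathlib

/-- For a Frobenius algebra in Rel, the relation `a ~ b := (mul a b).isSome`
is transitive. -/
theorem rel_frobenius_sim_trans {A : Type*} (mul : A → A → Option A)
    (hSurj : ∀ c : A, ∃ a b : A, mul a b = some c)
    (hC : ∀ a b : A, mul a b = mul b a)
    (hA : ∀ a b c : A,
      (mul a b).bind (fun w => mul w c) = (mul b c).bind (fun v => mul a v))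
    (hF : ∀ a b c d : A,
      (∃ e, mul a b = some e ∧ mul c d = some e) ↔
      (∃ b₁, mul b₁ d = some b ∧ mul a b₁ = some c)) :
    ∀ a b c : A, (mul a b).isSome → (mul b c).isSome → (mul a c).isSome := by
  intro a b c hab hbc
  obtain ⟨e, he⟩ := Option.isSome_iff_exists.mp hab
  obtain ⟨f, hf⟩ := Option.isSome_iff_exists.mp hbc
  obtain ⟨x, hx1, hx2⟩ := (hF a b b a).mp ⟨e, he, (hC b a).trans he⟩
  have h := hA x a c
  rw [hx1] at h
  simp only [Option.bind_some] at h
  rw [hf] at h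
  -- h : mul b c = (mul a c).bind fun v => mul x v, with LHS = some f
  cases hac : mul a c with
  | none => rw [hac] at h; simp [hf] at h ⊢ <;> exact (Option.noConfusion h)
  | some g => simp [hac]
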